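/- Let q > 0 and let f : ℝ → ℝ be continuous with f(0) = 0, and suppose the map s ↦ f(s)/s^{q−1} is nondecreasing on (0,∞). Then for every u ≥ 0 one has f(u)·u ≥ q·∫₀^u f(s) ds. -/

import Mathlib

open Set intervalIntegral

/-- If `s ↦ f(s)/s^(q-1)` is nondecreasing on `(0,∞)`, then `f(u)·u ≥ q·∫₀ᵘ f(s) ds`. -/
theorem mul_ge_q_mul_primitive
    (q : ℝ) (hq : 0 < q)
    (f : ℝ → ℝ) (hf : Continuous f) (hf0 : f 0 = 0)
    (hmono : MonotoneOn (fun s => f s / s ^ (q - 1)) (Ioi (0 : ℝ))) :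
    ∀ u : ℝ, 0 ≤ u → f u * u ≥ q * ∫ s in (0 : ℝ)..u, f s := by
  intro u hu
  rcases eq_or_lt_of_le hu with h0 | hu'
  · simp [← h0]
  set c := f u / u ^ (q - 1) with hc
  have hupow : (0:ℝ) < u ^ (q - 1) := Real.rpow_pos_of_pos hu' _
  have hle : ∀ s ∈ Ioc (0:ℝ) u, f s ≤ c * s ^ (q - 1) := by
    intro s hs
    have hsp : (0:ℝ) < s ^ (q - 1) := Real.rpow_pos_of_pos hs.1 _
    have h1 : f s / s ^ (q - 1) ≤ c := hmono (mem_Ioi.2 hs.1) (mem_Ioi.2 hu') hs.2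
    have h2 := mul_le_mul_of_nonneg_right h1 hsp.le
    rwa [div_mul_cancel₀ _ hsp.ne'] at h2
  have hint1 : IntervalIntegrable f MeasureTheory.volume 0 u :=
    hf.intervalIntegrable 0 u
  have hint2 : IntervalIntegrable (fun s => c * s ^ (q - 1)) MeasureTheory.volume 0 u := by
    exact (intervalIntegral.intervalIntegrable_rpow' (by linarith)).const_mul c
  have haemem : ∀ᵐ s ∂(MeasureTheory.volume.restrict (Icc 0 u)), s ∈ Icc 0 u :=
    MeasureTheory.ae_restrict_mem measurableSet_Icc
  have hane : ∀ᵐ s ∂(MeasureTheory.volume.restrict (Icc 0 u)), s ≠ 0 := by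
    refine MeasureTheory.ae_restrict_of_ae ?_
    have : MeasureTheory.volume ({(0:ℝ)}) = 0 := Real.volume_singleton
    rw [MeasureTheory.ae_iff]
    convert this using 2
    ext x; simp
  have hint : (∫ s in (0:ℝ)..u, f s) ≤ ∫ s in (0:ℝ)..u, c * s ^ (q - 1) := by
    refine intervalIntegral.integral_mono_ae_restrict hu'.le hint1 hint2 ?_
    filter_upwards [haemem, hane] with s hs hs0
    exact hle s ⟨lt_of_le_of_ne hs.1 (Ne.symm hs0), hs.2⟩
  have hval : (∫ s in (0:ℝ)..u, c * s ^ (q - 1)) = c * (u ^ q / q) := by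
    rw [intervalIntegral.integral_const_mul, integral_rpow (Or.inl (by linarith))]
    rw [Real.zero_rpow (by linarith : q - 1 + 1 ≠ 0)]
    ring_nf
  have hcu : c * (u ^ q / q) * q = f u * u := by
    have h1 : u ^ q = u ^ (q - 1) * u := by
      have h := Real.rpow_add hu' (q - 1) 1
      rw [show q - 1 + 1 = q from by ring, Real.rpow_one] at h
      exact h
    rw [hc, h1]
    field_simp
  calc q * ∫ s in (0:ℝ)..u, f s ≤ q * (c * (u ^ q / q)) := by
        exact mul_le_mul_of_nonneg_left (hval ▸ hint) hq.le
    _ = f u * u := by rw [← hcu]; ring
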